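/- Let p be a prime, n ≥ 1, and let μ be an integer with μ not divisible by p. Define Γ on the set H = {x ∈ ZMod(p^n) : p divides x} by Γ(x) = μ·x·(x+1) (computed in ZMod(p^n)). Then Γ maps H into H and is a bijection of H onto itself. -/

import Mathlib

/-- Property 1: For a prime `p`, `n ≥ 1`, and an integer `μ` not divisible by `p`,
the map `Γ(x) = μ·x·(x+1)` on `ZMod (p^n)` restricts to a bijection of the set
`H = {x : ZMod (p^n) | p ∣ x}` onto itself. -/
theorem logistic_bijOn_multiples_of_p (p : ℕ) (hp : p.Prime) (n : ℕ) (hn : 1 ≤ n)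
    (μ : ℤ) (hμ : ¬ (p : ℤ) ∣ μ) :
    Set.BijOn (fun x : ZMod (p ^ n) => (μ : ZMod (p ^ n)) * x * (x + 1))
      {x : ZMod (p ^ n) | (p : ZMod (p ^ n)) ∣ x}
      {x : ZMod (p ^ n) | (p : ZMod (p ^ n)) ∣ x} := by
  have hμunit : IsUnit (μ : ZMod (p ^ n)) := by
    have hcop : IsCoprime ((p : ℤ) ^ n) μ :=
      (((Int.prime_iff_natAbs_prime).mpr (by simpa using hp)).irreducible.coprime_iff_not_dvd.mpr
        hμ).pow_left
    obtain ⟨a, b, hab⟩ := hcop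
    refine IsUnit.of_mul_eq_one (b : ZMod (p ^ n)) ?_
    have := congrArg (fun z : ℤ => (z : ZMod (p ^ n))) hab
    push_cast at this
    have hz : ((p : ZMod (p ^ n))) ^ n = 0 := by rw [← Nat.cast_pow, ZMod.natCast_self]
    rw [hz] at this
    simpa [mul_comm] using this
  have hpnil : IsNilpotent (p : ZMod (p ^ n)) := by
    refine ⟨n, ?_⟩
    rw [← Nat.cast_pow, ZMod.natCast_self]
  have hmaps : Set.MapsTo (fun x : ZMod (p ^ n) => (μ : ZMod (p ^ n)) * x * (x + 1))
      {x : ZMod (p ^ n) | (p : ZMod (p ^ n)) ∣ x}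
      {x : ZMod (p ^ n) | (p : ZMod (p ^ n)) ∣ x} := by
    rintro x ⟨a, rfl⟩
    exact ⟨μ * a * ((p : ZMod (p ^ n)) * a + 1), by ring⟩
  have hinj : Set.InjOn (fun x : ZMod (p ^ n) => (μ : ZMod (p ^ n)) * x * (x + 1))
      {x : ZMod (p ^ n) | (p : ZMod (p ^ n)) ∣ x} := by
    rintro x ⟨a, rfl⟩ y ⟨b, rfl⟩ h
    simp only at h
    set P : ZMod (p ^ n) := (p : ZMod (p ^ n))
    have h' : P * a * (P * a + 1) = P * b * (P * b + 1) := hμunit.mul_left_cancel (show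
      (μ : ZMod (p ^ n)) * (P * a * (P * a + 1)) = (μ : ZMod (p ^ n)) * (P * b * (P * b + 1))
      by linear_combination h)
    have hfac : (P * a - P * b) * (P * a + P * b + 1) = 0 := by
      have : P * a * (P * a + 1) - P * b * (P * b + 1) = 0 := by rw [h']; ring
      calc (P * a - P * b) * (P * a + P * b + 1)
          = P * a * (P * a + 1) - P * b * (P * b + 1) := by ring
        _ = 0 := this
    have hu : IsUnit (P * a + P * b + 1) := by
      have : IsNilpotent (P * a + P * b) := by
        obtain ⟨k, hk⟩ := hpnil
        exact ⟨k, by rw [show P * a + P * b = P * (a + b) by ring, mul_pow, hk, zero_mul]⟩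
      simpa [add_comm] using this.isUnit_one_add
    have := hu.mul_left_cancel (show (P * a + P * b + 1) * (P * a - P * b)
        = (P * a + P * b + 1) * 0 by rw [mul_zero, mul_comm]; exact hfac)
    have hz : P * a - P * b = 0 := by simpa using this
    linear_combination hz
  have hfin : ({x : ZMod (p ^ n) | (p : ZMod (p ^ n)) ∣ x}).Finite := by
    have : NeZero (p ^ n) := ⟨pow_ne_zero n hp.ne_zero⟩
    exact Set.toFinite _
  exact (hfin.injOn_iff_bijOn_of_mapsTo hmaps).mp hinj
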